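/- Greedy multiplicative spanner guarantee: process the edges of a weighted graph G in non-decreasing order of weight; add edge (u,v) of weight w to G' only if currently d_{G'}(u,v) > α·w, with α ≥ 1. Then the resulting G' is an α-multiplicative spanner: d_{G'}(u,v) ≤ α·d_G(u,v) for all vertices u, v. -/

import Mathlib

open scoped ENNReal

structure WGraph (V : Type*) where
  Adj : V → V → Prop
  w : V → V → ℝ≥0∞

namespace WGraph

variable {V : Type*}

/-- Total weight of a walk starting at `u` with remaining vertex list `l`. -/
noncomputable def walkWeight (w : V → V → ℝ≥0∞) (u : V) (l : List V) : ℝ≥0∞ :=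
  (((u :: l).zip l).map fun p => w p.1 p.2).sum

/-- `l` is the (tail of the) vertex list of a walk from `u` to `v`. -/
def IsWalk (G : WGraph V) (u v : V) (l : List V) : Prop :=
  List.Chain G.Adj u l ∧ (u :: l).getLast (List.cons_ne_nil u l) = v

/-- Shortest-path distance: infimum of walk weights (`⊤` if no walk exists). -/
noncomputable def dist (G : WGraph V) (u v : V) : ℝ≥0∞ :=
  ⨅ l ∈ {l : List V | G.IsWalk u v l}, walkWeight G.w u l

/-- `G'` is a subgraph of `G` with inherited edge weights. -/
def IsSubgraph (G' G : WGraph V) : Prop :=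
  (∀ u v, G'.Adj u v → G.Adj u v) ∧ ∀ u v, G'.Adj u v → G'.w u v = G.w u v

/-- The (undirected) edge `{a, b}` appears among consecutive pairs of the walk. -/
def edgeInWalk (u : V) (l : List V) (a b : V) : Prop :=
  (a, b) ∈ (u :: l).zip l ∨ (b, a) ∈ (u :: l).zip l

/-- Vertices touched by some edge of `G`. -/
def support (G : WGraph V) : Set V := {v | ∃ u, G.Adj v u ∨ G.Adj u v}

end WGraph

open WGraph

open scoped Classical

/-- Add the (undirected) edge `e` to `R`, weights inherited from `G`. -/
def WGraph.addEdge {V : Type*} (G R : WGraph V) (e : V × V) : WGraph V :=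
  ⟨fun a b => R.Adj a b ∨ (a, b) = e ∨ (b, a) = e, G.w⟩

/-- One step of the greedy spanner algorithm: add edge `e` only if the current
distance between its endpoints exceeds `α` times its weight. -/
noncomputable def WGraph.greedyStep {V : Type*} (G : WGraph V) (α : ℝ≥0∞)
    (R : WGraph V) (e : V × V) : WGraph V :=
  if α * G.w e.1 e.2 < R.dist e.1 e.2 then G.addEdge R e else R

/-- The greedy spanner obtained by processing the edge list `L` in order,
starting from the empty graph. -/
noncomputable def WGraph.greedy {V : Type*} (G : WGraph V) (α : ℝ≥0∞)
    (L : List (V × V)) : WGraph V :=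
  L.foldl (G.greedyStep α) ⟨fun _ _ => False, G.w⟩

namespace GreedyAux

variable {V : Type*} {G R R' : WGraph V} {u v x m : V} {l : List V}

lemma walkWeight_nil (w : V → V → ℝ≥0∞) (u : V) : walkWeight w u [] = 0 := rfl

lemma walkWeight_cons (w : V → V → ℝ≥0∞) (u x : V) (l : List V) :
    walkWeight w u (x :: l) = w u x + walkWeight w x l := by
  simp [walkWeight]

lemma dist_le_walkWeight (h : G.IsWalk u v l) : G.dist u v ≤ walkWeight G.w u l :=
  iInf₂_le l h

lemma isWalk_nil : G.IsWalk u u [] := ⟨List.Chain.nil, rfl⟩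

lemma isWalk_nil_eq (h : G.IsWalk u v []) : u = v := h.2

lemma isWalk_cons_iff :
    G.IsWalk u v (x :: l) ↔ G.Adj u x ∧ G.IsWalk x v l := by
  constructor
  · rintro ⟨hc, hl⟩
    unfold List.Chain at hc
    rw [List.chain_cons] at hc
    refine ⟨hc.1, hc.2, ?_⟩
    rw [← hl]
    exact (List.getLast_cons (List.cons_ne_nil x l)).symm
  · rintro ⟨ha, hc, hl⟩
    refine ⟨List.chain_cons.2 ⟨ha, hc⟩, ?_⟩
    rw [List.getLast_cons (List.cons_ne_nil x l)]
    exact hl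

lemma dist_self (G : WGraph V) (u : V) : G.dist u u = 0 :=
  le_antisymm (dist_le_walkWeight isWalk_nil) zero_le

lemma dist_le_w (h : G.Adj u v) : G.dist u v ≤ G.w u v := by
  have hw : G.IsWalk u v [v] := isWalk_cons_iff.2 ⟨h, isWalk_nil⟩
  simpa [walkWeight_cons, walkWeight_nil] using dist_le_walkWeight hw


lemma dist_eq_iInf (G : WGraph V) (u v : V) :
    G.dist u v = ⨅ l : {l : List V // G.IsWalk u v l}, walkWeight G.w u l.1 :=
  (iInf_subtype'' _ _).symm

/-- prepend an edge -/
lemma dist_le_w_add (h : G.Adj u x) (v : V) :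
    G.dist u v ≤ G.w u x + G.dist x v := by
  rw [dist_eq_iInf G x v, ENNReal.add_iInf]
  refine le_iInf fun l => ?_
  calc G.dist u v ≤ walkWeight G.w u (x :: l.1) :=
        dist_le_walkWeight (isWalk_cons_iff.2 ⟨h, l.2⟩)
    _ = G.w u x + walkWeight G.w x l.1 := walkWeight_cons _ _ _ _

lemma dist_le_walkWeight_add (h : G.IsWalk u m l) (v : V) :
    G.dist u v ≤ walkWeight G.w u l + G.dist m v := by
  induction l generalizing u with
  | nil => simpa [walkWeight_nil, isWalk_nil_eq h] using le_rfl
  | cons x l ih =>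
      obtain ⟨ha, hw⟩ := isWalk_cons_iff.1 h
      calc G.dist u v ≤ G.w u x + G.dist x v := dist_le_w_add ha v
        _ ≤ G.w u x + (walkWeight G.w x l + G.dist m v) :=
            add_le_add_right (ih hw) _
        _ = walkWeight G.w u (x :: l) + G.dist m v := by
            rw [walkWeight_cons, add_assoc]

lemma dist_triangle (G : WGraph V) (u m v : V) :
    G.dist u v ≤ G.dist u m + G.dist m v := by
  rw [dist_eq_iInf G u m, ENNReal.iInf_add]
  exact le_iInf fun l => dist_le_walkWeight_add l.2 v

/-- symmetry of dist for symmetric graphs -/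
lemma dist_symm (hs : ∀ a b, G.Adj a b → G.Adj b a)
    (hw : ∀ a b, G.w a b = G.w b a) (u v : V) :
    G.dist u v = G.dist v u := by
  have key : ∀ (l : List V) (u v : V), G.IsWalk v u l →
      G.dist u v ≤ walkWeight G.w v l := by
    intro l
    induction l with
    | nil => intro u v h; simp [isWalk_nil_eq h, dist_self]
    | cons x l ih =>
        intro u v h
        obtain ⟨ha, hwalk⟩ := isWalk_cons_iff.1 h
        calc G.dist u v ≤ G.dist u x + G.dist x v := dist_triangle G u x v
          _ ≤ walkWeight G.w x l + G.w x v :=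
              add_le_add (ih u x hwalk) (dist_le_w (hs _ _ ha))
          _ = G.w v x + walkWeight G.w x l := by rw [add_comm, hw x v]
          _ = walkWeight G.w v (x :: l) := (walkWeight_cons _ _ _ _).symm
  refine le_antisymm ?_ ?_ <;> exact le_iInf₂ fun l hl => key l _ _ hl

lemma dist_anti (hAdj : ∀ a b, R.Adj a b → R'.Adj a b) (hw : R.w = R'.w)
    (u v : V) : R'.dist u v ≤ R.dist u v := by
  refine le_iInf₂ fun l hl => ?_
  have : R'.IsWalk u v l := ⟨List.IsChain.imp (fun a b h => hAdj a b h) hl.1, hl.2⟩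
  simpa [← hw] using dist_le_walkWeight this

variable (G) in
lemma greedyStep_w (α : ℝ≥0∞) (e : V × V) (hR : R.w = G.w) :
    (G.greedyStep α R e).w = G.w := by
  unfold WGraph.greedyStep
  split
  · rfl
  · exact hR

variable (G) in
lemma greedyStep_adj (α : ℝ≥0∞) (e : V × V) {a b : V} (h : R.Adj a b) :
    (G.greedyStep α R e).Adj a b := by
  unfold WGraph.greedyStep
  split
  · exact Or.inl h
  · exact h

variable (G) in
lemma foldl_w (α : ℝ≥0∞) (L : List (V × V)) (hR : R.w = G.w) :
    (L.foldl (G.greedyStep α) R).w = G.w := by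
  induction L generalizing R with
  | nil => exact hR
  | cons e L ih => exact ih (greedyStep_w G α e hR)

variable (G) in
lemma foldl_adj (α : ℝ≥0∞) (L : List (V × V)) {a b : V} (h : R.Adj a b) :
    (L.foldl (G.greedyStep α) R).Adj a b := by
  induction L generalizing R with
  | nil => exact h
  | cons e L ih => exact ih (greedyStep_adj G α e h)

variable (G) in
lemma greedyStep_symm (α : ℝ≥0∞) (e : V × V)
    (hR : ∀ a b, R.Adj a b → R.Adj b a) :
    ∀ a b, (G.greedyStep α R e).Adj a b → (G.greedyStep α R e).Adj b a := by
  intro a b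
  unfold WGraph.greedyStep
  split
  · rintro (h | h | h)
    exacts [Or.inl (hR a b h), Or.inr (Or.inr h), Or.inr (Or.inl h)]
  · exact hR a b

variable (G) in
lemma foldl_symm (α : ℝ≥0∞) (L : List (V × V))
    (hR : ∀ a b, R.Adj a b → R.Adj b a) :
    ∀ a b, (L.foldl (G.greedyStep α) R).Adj a b →
      (L.foldl (G.greedyStep α) R).Adj b a := by
  induction L generalizing R with
  | nil => exact hR
  | cons e L ih => exact ih (greedyStep_symm G α e hR)

lemma foldr_min_pos (l : List ℝ≥0∞) (h : ∀ x ∈ l, 0 < x) :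
    0 < l.foldr min ⊤ := by
  induction l with
  | nil => simp
  | cons x l ih =>
      simp only [List.foldr_cons]
      exact lt_min (h x List.mem_cons_self)
        (ih fun y hy => h y (List.mem_cons_of_mem x hy))

lemma foldr_min_le (l : List ℝ≥0∞) {x : ℝ≥0∞} (hx : x ∈ l) :
    l.foldr min ⊤ ≤ x := by
  induction l with
  | nil => exact absurd hx List.not_mem_nil
  | cons y l ih =>
      simp only [List.foldr_cons]
      rcases List.mem_cons.1 hx with rfl | hx
      · exact min_le_left _ _
      · exact le_trans (min_le_right _ _) (ih hx)

/-- The key invariant: every processed edge has spanner distance ≤ α * weight. -/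
lemma invariant (α : ℝ≥0∞) (hα : 1 ≤ α) (L : List (V × V)) (hR : R.w = G.w) :
    ∀ e ∈ L, (L.foldl (G.greedyStep α) R).dist e.1 e.2 ≤ α * G.w e.1 e.2 := by
  induction L generalizing R with
  | nil => intro e he; exact absurd he List.not_mem_nil
  | cons x L ih =>
      intro e he
      rcases List.mem_cons.1 he with rfl | he
      · -- bound right after this step, then use antitonicity
        have step : (G.greedyStep α R e).dist e.1 e.2 ≤ α * G.w e.1 e.2 := by
          unfold WGraph.greedyStep
          split
          · have hadj : (G.addEdge R e).Adj e.1 e.2 := Or.inr (Or.inl rfl)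
            have : (G.addEdge R e).dist e.1 e.2 ≤ G.w e.1 e.2 := dist_le_w hadj
            calc (G.addEdge R e).dist e.1 e.2 ≤ G.w e.1 e.2 := this
              _ = 1 * G.w e.1 e.2 := (one_mul _).symm
              _ ≤ α * G.w e.1 e.2 := mul_le_mul_left hα _
          · next h => exact not_lt.1 h
        calc (L.foldl (G.greedyStep α) (G.greedyStep α R e)).dist e.1 e.2
            ≤ (G.greedyStep α R e).dist e.1 e.2 := by
              refine dist_anti (fun a b h => foldl_adj G α L h) ?_ e.1 e.2
              rw [foldl_w G α L (greedyStep_w G α e hR), greedyStep_w G α e hR]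
          _ ≤ α * G.w e.1 e.2 := step
      · exact ih (greedyStep_w G α x hR) e he

lemma walk_bound {α : ℝ≥0∞}
    (hinv : ∀ a b, G.Adj a b → R.dist a b ≤ α * G.w a b) :
    ∀ (l : List V) (u v : V), G.IsWalk u v l →
      R.dist u v ≤ α * walkWeight G.w u l := by
  intro l
  induction l with
  | nil => intro u v h; simp [isWalk_nil_eq h, dist_self]
  | cons x l ih =>
      intro u v h
      obtain ⟨ha, hwalk⟩ := isWalk_cons_iff.1 h
      calc R.dist u v ≤ R.dist u x + R.dist x v := dist_triangle R u x v
        _ ≤ α * G.w u x + α * walkWeight G.w x l :=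
            add_le_add (hinv u x ha) (ih x v hwalk)
        _ = α * walkWeight G.w u (x :: l) := by
            rw [walkWeight_cons, mul_add]

end GreedyAux

open GreedyAux in
/-- the greedy algorithm, processing all edges of `G` in
non-decreasing order of weight, produces an `α`-multiplicative spanner. -/
theorem greedy_is_multiplicative_spanner {V : Type*} (G : WGraph V)
    (α : ℝ≥0∞) (hα : 1 ≤ α)
    (hpos : ∀ u v : V, G.Adj u v → 0 < G.w u v)
    (hsymm : ∀ u v : V, G.Adj u v → G.Adj v u)
    (hwsymm : ∀ u v : V, G.w u v = G.w v u)
    (L : List (V × V))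
    (hL : ∀ e ∈ L, G.Adj e.1 e.2)
    (hall : ∀ u v : V, G.Adj u v → (u, v) ∈ L ∨ (v, u) ∈ L)
    (hsorted : L.Pairwise fun e f => G.w e.1 e.2 ≤ G.w f.1 f.2) :
    ∀ u v : V, (G.greedy α L).dist u v ≤ α * G.dist u v := by
  set R : WGraph V := G.greedy α L with hRdef
  have hα0 : α ≠ 0 := fun h => by simp [h] at hα
  -- basic facts about R
  have hRw : R.w = G.w := foldl_w G α L rfl
  have hRsymm : ∀ a b, R.Adj a b → R.Adj b a :=
    foldl_symm G α L (fun a b h => h.elim)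
  have hRwsymm : ∀ a b, R.w a b = R.w b a := by
    intro a b; rw [hRw]; exact hwsymm a b
  have hinvL : ∀ e ∈ L, R.dist e.1 e.2 ≤ α * G.w e.1 e.2 :=
    invariant α hα L rfl
  have hinv : ∀ a b, G.Adj a b → R.dist a b ≤ α * G.w a b := by
    intro a b h
    rcases hall a b h with hm | hm
    · exact hinvL (a, b) hm
    · have := hinvL (b, a) hm
      rw [dist_symm hRsymm hRwsymm a b]
      simpa [hwsymm a b] using this
  -- positive lower bound on G-distances between distinct vertices
  set c : ℝ≥0∞ := (L.map fun e => G.w e.1 e.2).foldr min ⊤ with hc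
  have hcpos : 0 < c := by
    refine foldr_min_pos _ fun x hx => ?_
    obtain ⟨e, he, rfl⟩ := List.mem_map.1 hx
    exact hpos e.1 e.2 (hL e he)
  have hcle : ∀ e ∈ L, c ≤ G.w e.1 e.2 := fun e he =>
    foldr_min_le _ (List.mem_map_of_mem he)
  have hcw : ∀ a b, G.Adj a b → c ≤ G.w a b := by
    intro a b h
    rcases hall a b h with hm | hm
    · exact hcle (a, b) hm
    · rw [hwsymm a b]; exact hcle (b, a) hm
  have hdpos : ∀ u v : V, u ≠ v → c ≤ G.dist u v := by
    intro u v huv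
    refine le_iInf₂ fun l hl => ?_
    cases l with
    | nil => exact absurd (isWalk_nil_eq hl) huv
    | cons x l =>
        obtain ⟨ha, _⟩ := isWalk_cons_iff.1 hl
        rw [walkWeight_cons]
        exact le_trans (hcw u x ha) le_self_add
  -- main argument
  intro u v
  rcases eq_or_ne u v with rfl | huv
  · rw [GreedyAux.dist_self]; exact zero_le
  rcases eq_or_ne (G.dist u v) ⊤ with hd | hd
  · rw [hd, ENNReal.mul_top hα0]; exact le_top
  rcases eq_or_ne α ⊤ with rfl | hαt
  · have : G.dist u v ≠ 0 := (lt_of_lt_of_le hcpos (hdpos u v huv)).ne'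
    rw [ENNReal.top_mul this]; exact le_top
  · -- α finite and nonzero
    rw [dist_eq_iInf G u v, ENNReal.mul_iInf_of_ne hα0 hαt]
    exact le_iInf fun l => walk_bound hinv l.1 u v l.2
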